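/- Let (X, τ, 𝔐, μ) be a topological measure space with a countable cover of X by open sets of finite measure. Then the following are equivalent: (a) μ is Borel regular and every open set is the union of an F_σ set and a null set; (b) μ is outer regular on 𝔐, i.e. μ(E) = inf{μ(O): O open, O ⊇ E} for every E ∈ 𝔐; (c) μ is inner regular on 𝔐, i.e. μ(E) = sup{μ(C): C closed, C ⊆ E} for every E ∈ 𝔐. -/

import Mathlib

open MeasureTheory Set Topology
open scoped ENNReal NNReal

lemma auxA1 {Y : Type*} [TopologicalSpace Y] [m : MeasurableSpace Y] [BorelSpace Y]
    (ν : Measure Y) (W : ℕ → Set Y) (hWo : ∀ n, IsOpen (W n)) (hWu : (⋃ n, W n) = univ)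
    (hWf : ∀ n, ν (W n) < ⊤)
    (hcl : ∀ U : Set Y, IsOpen U → ∀ r, r < ν U → ∃ C, IsClosed C ∧ C ⊆ U ∧ r < ν C)
    {A : Set Y} (hA : MeasurableSet A) {ε : ℝ≥0∞} (hε : ε ≠ 0) :
    ∃ U, IsOpen U ∧ A ⊆ U ∧ ν (U \ A) ≤ ε := by
  have hfin : ∀ n, IsFiniteMeasure (ν.restrict (W n)) := fun n =>
    ⟨by rw [Measure.restrict_apply_univ]; exact hWf n⟩
  have hWR : ∀ n, (ν.restrict (W n)).WeaklyRegular := by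
    intro n
    haveI := hfin n
    refine Measure.InnerRegularWRT.weaklyRegular_of_finite _ ?_
    intro U hU r hr
    rw [Measure.restrict_apply hU.measurableSet] at hr
    obtain ⟨C, hCc, hCs, hrC⟩ := hcl (U ∩ W n) (hU.inter (hWo n)) r hr
    refine ⟨C, hCs.trans inter_subset_left, hCc, ?_⟩
    rwa [Measure.restrict_apply hCc.measurableSet,
      inter_eq_self_of_subset_left (hCs.trans inter_subset_right)]
  obtain ⟨δ, δ0, hδ⟩ := ENNReal.exists_pos_sum_of_countable hε ℕ
  have key : ∀ n : ℕ, ∃ U, A ⊆ U ∧ IsOpen U ∧ ν.restrict (W n) (U \ A) < δ n := by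
    intro n
    haveI := hfin n
    haveI := hWR n
    obtain ⟨U, hAU, hUo, -, h⟩ := MeasurableSet.exists_isOpen_diff_lt
      (μ := ν.restrict (W n)) hA (measure_ne_top _ _) (ENNReal.coe_pos.2 (δ0 n)).ne'
    exact ⟨U, hAU, hUo, h⟩
  choose U hAU hUo hU using key
  refine ⟨⋃ n, U n ∩ W n, isOpen_iUnion fun n => (hUo n).inter (hWo n), ?_, ?_⟩
  · intro x hx
    have : x ∈ ⋃ n, W n := hWu.symm ▸ mem_univ x
    obtain ⟨n, hn⟩ := mem_iUnion.1 this
    exact mem_iUnion.2 ⟨n, ⟨hAU n hx, hn⟩⟩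
  · calc ν ((⋃ n, U n ∩ W n) \ A) ≤ ∑' n, ν ((U n ∩ W n) \ A) := by
          rw [iUnion_diff]; exact measure_iUnion_le _
      _ ≤ ∑' n, (δ n : ℝ≥0∞) := by
          refine ENNReal.tsum_le_tsum fun n => ?_
          have he : (U n ∩ W n) \ A = (U n \ A) ∩ W n := by
            ext x; simp only [mem_diff, mem_inter_iff]; tauto
          rw [he, ← Measure.restrict_apply ((hUo n).measurableSet.diff hA)]
          exact (hU n).le
      _ ≤ ε := hδ.le

theorem stmt3 {X : Type*} [TopologicalSpace X] [MeasurableSpace X]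
    (hBorel : ∀ s : Set X, IsOpen s → MeasurableSet s)
    (μ : Measure X)
    (hcover : ∃ O : ℕ → Set X, (∀ n, IsOpen (O n)) ∧ (⋃ n, O n) = Set.univ ∧ ∀ n, μ (O n) < ⊤) :
    List.TFAE [
      ((∀ E : Set X, MeasurableSet E →
        ∃ B : Set X, MeasurableSet[borel X] B ∧ E ⊆ B ∧ μ B = μ E) ∧
       (∀ U : Set X, IsOpen U →
        ∃ (F Z : Set X) (C : ℕ → Set X),
          (∀ n, IsClosed (C n)) ∧ F = ⋃ n, C n ∧ μ Z = 0 ∧ U = F ∪ Z)),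
      (∀ E : Set X, MeasurableSet E →
        μ E = ⨅ (O : Set X) (_ : IsOpen O) (_ : E ⊆ O), μ O),
      (∀ E : Set X, MeasurableSet E →
        μ E = ⨆ (C : Set X) (_ : IsClosed C) (_ : C ⊆ E), μ C)] := by
  obtain ⟨O, hOo, hOu, hOf⟩ := hcover
  haveI : OpensMeasurableSpace X := ⟨MeasurableSpace.generateFrom_le hBorel⟩
  have hm : borel X ≤ ‹MeasurableSpace X› := OpensMeasurableSpace.borel_le
  -- open sets are Borel measurable
  have hob : ∀ {s : Set X}, IsOpen s → MeasurableSet[borel X] s := fun hs =>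
    MeasurableSpace.measurableSet_generateFrom hs
  have hcb : ∀ {s : Set X}, IsClosed s → MeasurableSet[borel X] s := fun {s} hs => by
    have := (hob hs.isOpen_compl).compl
    rwa [compl_compl] at this
  -- cumulative cover
  set W : ℕ → Set X := fun n => Set.accumulate O n with hWdef
  have hWo : ∀ n, IsOpen (W n) := fun n => isOpen_biUnion fun j _ => hOo j
  have hWu : (⋃ n, W n) = univ := by rw [hWdef]; rw [Set.iUnion_accumulate]; exact hOu
  have hWmono : Monotone W := Set.monotone_accumulate
  have hWf : ∀ n, μ (W n) < ⊤ := fun n => by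
    rw [hWdef]
    exact measure_biUnion_lt_top (Set.finite_Iic n) fun j _ => hOf j
  have hWm : ∀ n, MeasurableSet (W n) := fun n => (hWo n).measurableSet
  -- the trimmed measure on the Borel σ-algebra
  set ν : @Measure X (borel X) := μ.trim hm with hνdef
  have hν : ∀ {s : Set X}, MeasurableSet[borel X] s → ν s = μ s := fun hs =>
    trim_measurableSet_eq hm hs
  -- a small numerical helper
  have hzero : ∀ {a : ℝ≥0∞}, (∀ m : ℕ, a ≤ ((m : ℝ≥0∞) + 1)⁻¹) → a = 0 := by
    intro a ha
    refine le_zero_iff.mp (ENNReal.le_of_forall_pos_le_add fun ε hε _ => ?_)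
    obtain ⟨n, hn⟩ := ENNReal.exists_inv_nat_lt (show (ε : ℝ≥0∞) ≠ 0 by
      exact_mod_cast hε.ne')
    calc a ≤ ((n : ℝ≥0∞) + 1)⁻¹ := ha n
      _ ≤ (n : ℝ≥0∞)⁻¹ := ENNReal.inv_le_inv.2 (le_add_of_nonneg_right zero_le_one)
      _ ≤ ε := hn.le
      _ = 0 + ε := (zero_add _).symm
  -- strong outer regularity for Borel sets, assuming hypothesis (1b)
  have houter : (∀ U : Set X, IsOpen U → ∃ (F Z : Set X) (C : ℕ → Set X),
        (∀ n, IsClosed (C n)) ∧ F = ⋃ n, C n ∧ μ Z = 0 ∧ U = F ∪ Z) →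
      ∀ B : Set X, MeasurableSet[borel X] B → ∀ ε : ℝ≥0∞, ε ≠ 0 →
      ∃ U, IsOpen U ∧ B ⊆ U ∧ μ (U \ B) ≤ ε := by
    intro hFσ B hB ε hε
    have hcl : ∀ U : Set X, IsOpen U → ∀ r, r < ν U → ∃ C, IsClosed C ∧ C ⊆ U ∧ r < ν C := by
      intro U hU r hr
      obtain ⟨F, Z, C, hCc, hFeq, hZ, hUeq⟩ := hFσ U hU
      have hFU : F ⊆ U := hUeq ▸ subset_union_left
      have hμUF : μ U ≤ ⨆ N, μ (Set.accumulate C N) := by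
        have h1 : μ U ≤ μ F := by
          calc μ U = μ (F ∪ Z) := by rw [← hUeq]
            _ ≤ μ F + μ Z := measure_union_le _ _
            _ = μ F := by rw [hZ, add_zero]
        have h2 : μ F = ⨆ N, μ (Set.accumulate C N) := by
          rw [hFeq, ← Set.iUnion_accumulate]
          exact Monotone.measure_iUnion Set.monotone_accumulate
        exact h2 ▸ h1
      have hr' : r < ⨆ N, μ (Set.accumulate C N) :=
        lt_of_lt_of_le (by rwa [hν (hob hU)] at hr) hμUF
      obtain ⟨N, hN⟩ := lt_iSup_iff.1 hr'
      have hDc : IsClosed (Set.accumulate C N) :=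
        (Set.finite_Iic N).isClosed_biUnion fun j _ => hCc j
      refine ⟨Set.accumulate C N, hDc, ?_, ?_⟩
      · exact fun x hx => hFU (by rw [hFeq]; exact Set.accumulate_subset_iUnion N hx)
      · rwa [hν (hcb hDc)]
    have hWfν : ∀ n, ν (W n) < ⊤ := fun n => by rw [hν (hob (hWo n))]; exact hWf n
    obtain ⟨U, hUo, hBU, h⟩ := @auxA1 X _ (borel X) (@BorelSpace.mk X _ (borel X) rfl) ν W hWo hWu hWfν hcl B hB ε hε
    exact ⟨U, hUo, hBU, by rwa [hν ((hob hUo).diff hB)] at h⟩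
  tfae_have 1 → 2 := by
    rintro ⟨hreg, hFσ⟩ E hE
    refine le_antisymm (le_iInf fun U => le_iInf fun _ => le_iInf fun hEU => measure_mono hEU) ?_
    obtain ⟨B, hB, hEB, hμB⟩ := hreg E hE
    refine ENNReal.le_of_forall_pos_le_add fun ε hε hfin => ?_
    obtain ⟨U, hUo, hBU, hU⟩ := houter hFσ B hB ε (by exact_mod_cast hε.ne')
    have hμU : μ U ≤ μ E + ε := by
      calc μ U = μ (B ∪ U \ B) := by rw [union_diff_cancel hBU]
        _ ≤ μ B + μ (U \ B) := measure_union_le _ _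
        _ ≤ μ E + ε := add_le_add hμB.le hU
    exact le_trans (iInf_le_of_le U (iInf_le_of_le hUo (iInf_le_of_le (hEB.trans hBU) le_rfl))) hμU
  tfae_have 1 → 3 := by
    rintro ⟨hreg, hFσ⟩ E hE
    refine le_antisymm ?_ (iSup_le fun C => iSup_le fun _ => iSup_le fun hCE => measure_mono hCE)
    refine le_of_forall_lt fun r hr => ?_
    have hEsup : μ E = ⨆ n, μ (E ∩ W n) := by
      have h : ⋃ n, E ∩ W n = E := by rw [← inter_iUnion, hWu, inter_univ]
      conv_lhs => rw [← h]
      exact Monotone.measure_iUnion (monotone_const.inter hWmono)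
    rw [hEsup] at hr
    obtain ⟨n, hn⟩ := lt_iSup_iff.1 hr
    have htfin : μ (E ∩ W n) ≠ ⊤ :=
      (lt_of_le_of_lt (measure_mono inter_subset_right) (hWf n)).ne
    obtain ⟨s, hrs, hst⟩ := exists_between hn
    set δ : ℝ≥0∞ := (s - r) / 2 with hδdef
    have hδ0 : δ ≠ 0 := by
      refine (ENNReal.half_pos ?_).ne'
      exact (tsub_pos_of_lt hrs).ne'
    have hδδ : r + (δ + δ) = s := by
      rw [ENNReal.add_halves, add_tsub_cancel_of_le hrs.le]
    -- Borel hull of `W n \ E`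
    obtain ⟨B, hB, hAB, hμB⟩ := hreg (W n \ E) ((hWm n).diff hE)
    set B' : Set X := B ∩ W n with hB'def
    have hB'b : MeasurableSet[borel X] B' := hB.inter (hob (hWo n))
    have hAB' : W n \ E ⊆ B' := subset_inter hAB diff_subset
    have hB'W : B' ⊆ W n := inter_subset_right
    have hμB' : μ B' = μ (W n \ E) :=
      le_antisymm (hμB ▸ measure_mono inter_subset_left) (measure_mono hAB')
    have hB'Efin : μ (B' \ E) ≠ ⊤ :=
      (lt_of_le_of_lt (measure_mono (diff_subset.trans hB'W)) (hWf n)).ne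
    have hBE0 : μ (B' ∩ E) = 0 := by
      have h1 : μ (B' ∩ E) + μ (B' \ E) = μ B' := measure_inter_add_diff B' hE
      have h2 : μ B' ≤ μ (B' \ E) := by
        rw [hμB']
        exact measure_mono fun x hx => ⟨hAB' hx, hx.2⟩
      have h3 : μ (B' ∩ E) + μ (B' \ E) ≤ 0 + μ (B' \ E) := by
        rw [zero_add]; exact h1.le.trans h2
      exact le_zero_iff.mp ((ENNReal.add_le_add_iff_right hB'Efin).mp h3)
    obtain ⟨V, hVo, hB'V, hV⟩ := houter hFσ B' hB'b δ hδ0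
    -- Fσ structure of `W n`
    obtain ⟨F, Z, C, hCc, hFeq, hZ, hWeq⟩ := hFσ (W n) (hWo n)
    have hFW : F ⊆ W n := hWeq ▸ subset_union_left
    have hDW : ∀ M, Set.accumulate C M ⊆ W n := fun M =>
      (Set.accumulate_subset_iUnion M).trans (by rw [← hFeq]; exact hFW)
    have hsupD : μ (W n) = ⨆ M, μ (Set.accumulate C M) := by
      have h1 : μ (W n) ≤ μ F := by
        calc μ (W n) = μ (F ∪ Z) := by rw [← hWeq]
          _ ≤ μ F + μ Z := measure_union_le _ _
          _ = μ F := by rw [hZ, add_zero]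
      have h2 : μ F = ⨆ M, μ (Set.accumulate C M) := by
        rw [hFeq, ← Set.iUnion_accumulate]
        exact Monotone.measure_iUnion Set.monotone_accumulate
      refine le_antisymm (h2 ▸ h1) (iSup_le fun M => measure_mono (hDW M))
    obtain ⟨M, hM⟩ : ∃ M, μ (W n) ≤ μ (Set.accumulate C M) + δ := by
      rcases le_or_gt (μ (W n)) δ with h | h
      · exact ⟨0, h.trans le_add_self⟩
      · have hlt : μ (W n) - δ < ⨆ M, μ (Set.accumulate C M) := by
          rw [← hsupD]
          exact ENNReal.sub_lt_self (hWf n).ne (lt_of_le_of_lt (zero_le : 0 ≤ δ) h).ne' hδ0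
        obtain ⟨M, hM⟩ := lt_iSup_iff.1 hlt
        exact ⟨M, tsub_le_iff_right.mp hM.le⟩
    set D : Set X := Set.accumulate C M with hDdef
    have hDc : IsClosed D := (Set.finite_Iic M).isClosed_biUnion fun j _ => hCc j
    have hDfin : μ D ≠ ⊤ := (lt_of_le_of_lt (measure_mono (hDW M)) (hWf n)).ne
    have hWD : μ (W n \ D) ≤ δ := by
      rw [measure_diff (hDW M) hDc.measurableSet.nullMeasurableSet hDfin]
      exact tsub_le_iff_left.mpr hM
    set K : Set X := Vᶜ ∩ D with hKdef
    have hKc : IsClosed K := hVo.isClosed_compl.inter hDc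
    have hKE : K ⊆ E := by
      rintro x ⟨hxV, hxD⟩
      by_contra hxE
      exact hxV (hB'V (hAB' ⟨hDW M hxD, hxE⟩))
    have hVEW : μ ((V ∩ E) ∩ W n) ≤ δ := by
      have hsub : (V ∩ E) ∩ W n ⊆ (V \ B') ∪ (B' ∩ E) := by
        rintro x ⟨⟨hxV, hxE⟩, _⟩
        by_cases hxB : x ∈ B'
        · exact Or.inr ⟨hxB, hxE⟩
        · exact Or.inl ⟨hxV, hxB⟩
      calc μ ((V ∩ E) ∩ W n) ≤ μ (V \ B') + μ (B' ∩ E) :=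
            (measure_mono hsub).trans (measure_union_le _ _)
        _ ≤ δ := by rw [hBE0, add_zero]; exact hV
    have hchain : μ (E ∩ W n) ≤ μ K + (δ + δ) := by
      have hsub : E ∩ W n ⊆ K ∪ ((V ∩ E) ∩ W n ∪ (W n \ D)) := by
        rintro x ⟨hxE, hxW⟩
        by_cases hxV : x ∈ V
        · exact Or.inr (Or.inl ⟨⟨hxV, hxE⟩, hxW⟩)
        · by_cases hxD : x ∈ D
          · exact Or.inl ⟨hxV, hxD⟩
          · exact Or.inr (Or.inr ⟨hxW, hxD⟩)
      calc μ (E ∩ W n) ≤ μ (K ∪ ((V ∩ E) ∩ W n ∪ (W n \ D))) := measure_mono hsub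
        _ ≤ μ K + μ ((V ∩ E) ∩ W n ∪ (W n \ D)) := measure_union_le _ _
        _ ≤ μ K + (μ ((V ∩ E) ∩ W n) + μ (W n \ D)) := by
            gcongr
            exact measure_union_le _ _
        _ ≤ μ K + (δ + δ) := by gcongr
    have hrK : r < μ K := by
      by_contra hcon
      push_neg at hcon
      have hts : μ (E ∩ W n) ≤ s := by
        calc μ (E ∩ W n) ≤ μ K + (δ + δ) := hchain
          _ ≤ r + (δ + δ) := by gcongr
          _ = s := hδδ
      exact absurd hst (not_lt.2 hts)
    calc r < μ K := hrK
      _ ≤ ⨆ (C : Set X) (_ : IsClosed C) (_ : C ⊆ E), μ C := by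
          refine le_iSup_of_le K ?_
          rw [iSup_pos hKc, iSup_pos hKE]
  tfae_have 2 → 1 := by
    intro h2
    have hstrong : ∀ D : Set X, MeasurableSet D → μ D ≠ ⊤ → ∀ δ : ℝ≥0∞, δ ≠ 0 →
        ∃ V, IsOpen V ∧ D ⊆ V ∧ μ (V \ D) < δ := by
      intro D hD hDfin δ hδ
      have h : (⨅ (O : Set X) (_ : IsOpen O) (_ : D ⊆ O), μ O) < μ D + δ := by
        rw [← h2 D hD]; exact ENNReal.lt_add_right hDfin hδ
      simp only [iInf_lt_iff] at h
      obtain ⟨V, hVo, hDV, hV⟩ := h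
      exact ⟨V, hVo, hDV, measure_diff_lt_of_lt_add hD.nullMeasurableSet hDV hDfin hV⟩
    constructor
    · intro E hE
      rcases eq_or_ne (μ E) ⊤ with htop | hfin
      · refine ⟨univ, MeasurableSet.univ, subset_univ E, ?_⟩
        rw [htop]
        exact top_le_iff.mp (htop ▸ measure_mono (subset_univ E))
      · have key : ∀ k : ℕ, ∃ Uk, IsOpen Uk ∧ E ⊆ Uk ∧ μ Uk ≤ μ E + ((k : ℝ≥0∞) + 1)⁻¹ := by
          intro k
          obtain ⟨V, hVo, hEV, hV⟩ := hstrong E hE hfin ((k : ℝ≥0∞) + 1)⁻¹ (by simp)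
          refine ⟨V, hVo, hEV, ?_⟩
          calc μ V = μ (E ∪ V \ E) := by rw [union_diff_cancel hEV]
            _ ≤ μ E + μ (V \ E) := measure_union_le _ _
            _ ≤ μ E + ((k : ℝ≥0∞) + 1)⁻¹ := add_le_add le_rfl hV.le
        choose U hUo hEU hU using key
        refine ⟨⋂ k, U k, MeasurableSet.iInter fun k => hob (hUo k), subset_iInter hEU, ?_⟩
        refine le_antisymm (ENNReal.le_of_forall_pos_le_add fun ε hε _ => ?_)
          (measure_mono (subset_iInter hEU))
        obtain ⟨n, hn⟩ := ENNReal.exists_inv_nat_lt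
          (show (ε : ℝ≥0∞) ≠ 0 by exact_mod_cast hε.ne')
        calc μ (⋂ k, U k) ≤ μ (U n) := measure_mono (iInter_subset _ n)
          _ ≤ μ E + ((n : ℝ≥0∞) + 1)⁻¹ := hU n
          _ ≤ μ E + ε := add_le_add le_rfl
              ((ENNReal.inv_le_inv.2 (le_add_of_nonneg_right zero_le_one)).trans hn.le)
    · intro U hU
      have haux : ∀ ε : ℝ≥0∞, ε ≠ 0 → ∃ Cs, IsClosed Cs ∧ Cs ⊆ U ∧ μ (U \ Cs) ≤ ε := by
        intro ε hε
        obtain ⟨δ, δ0, hδ⟩ := ENNReal.exists_pos_sum_of_countable hε ℕ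
        have key : ∀ n : ℕ, ∃ V, IsOpen V ∧ Uᶜ ∩ W n ⊆ V ∧ μ (V \ (Uᶜ ∩ W n)) < δ n :=
          fun n => hstrong _ ((hBorel U hU).compl.inter (hWm n))
            (lt_of_le_of_lt (measure_mono inter_subset_right) (hWf n)).ne _
            (ENNReal.coe_pos.2 (δ0 n)).ne'
        choose V hVo hsubV hV using key
        have hGo : IsOpen (⋃ n, V n ∩ W n) := isOpen_iUnion fun n => (hVo n).inter (hWo n)
        have hUG : Uᶜ ⊆ ⋃ n, V n ∩ W n := by
          intro x hx
          have hxu : x ∈ ⋃ n, W n := hWu.symm ▸ mem_univ x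
          obtain ⟨n, hn⟩ := mem_iUnion.1 hxu
          exact mem_iUnion.2 ⟨n, hsubV n ⟨hx, hn⟩, hn⟩
        have hterm : ∀ n, μ (U ∩ (V n ∩ W n)) ≤ δ n := by
          intro n
          refine (measure_mono ?_).trans (hV n).le
          rintro x ⟨hxU, hxV, hxW⟩
          exact ⟨hxV, fun hc => hc.1 hxU⟩
        refine ⟨(⋃ n, V n ∩ W n)ᶜ, hGo.isClosed_compl, compl_subset_comm.mp hUG, ?_⟩
        calc μ (U \ (⋃ n, V n ∩ W n)ᶜ) = μ (⋃ n, U ∩ (V n ∩ W n)) := by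
              rw [diff_compl, inter_iUnion]
          _ ≤ ∑' n, μ (U ∩ (V n ∩ W n)) := measure_iUnion_le _
          _ ≤ ∑' n, (δ n : ℝ≥0∞) := ENNReal.tsum_le_tsum hterm
          _ ≤ ε := hδ.le
      have key2 : ∀ m : ℕ, ∃ Cs, IsClosed Cs ∧ Cs ⊆ U ∧ μ (U \ Cs) ≤ ((m : ℝ≥0∞) + 1)⁻¹ :=
        fun m => haux _ (by simp)
      choose Cs hCc hCU hCm using key2
      refine ⟨⋃ m, Cs m, U \ ⋃ m, Cs m, Cs, hCc, rfl, ?_, ?_⟩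
      · refine hzero fun m => ?_
        refine (measure_mono fun x hx => ?_).trans (hCm m)
        exact ⟨hx.1, fun hc => hx.2 (mem_iUnion_of_mem m hc)⟩
      · exact (union_diff_cancel (iUnion_subset hCU)).symm
  tfae_have 3 → 1 := by
    intro h3
    have hinner : ∀ G : Set X, MeasurableSet G → μ G ≠ ⊤ → ∀ δ : ℝ≥0∞, δ ≠ 0 →
        ∃ C, IsClosed C ∧ C ⊆ G ∧ μ G ≤ μ C + δ := by
      intro G hG hGfin δ hδ
      rcases le_or_gt (μ G) δ with h | h
      · exact ⟨∅, isClosed_empty, empty_subset _, h.trans le_add_self⟩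
      · have hlt : μ G - δ < ⨆ (C : Set X) (_ : IsClosed C) (_ : C ⊆ G), μ C := by
          rw [← h3 G hG]
          exact ENNReal.sub_lt_self hGfin (lt_of_le_of_lt (zero_le : 0 ≤ δ) h).ne' hδ
        simp only [lt_iSup_iff] at hlt
        obtain ⟨C, hCc, hCG, hC⟩ := hlt
        exact ⟨C, hCc, hCG, tsub_le_iff_right.mp hC.le⟩
    constructor
    · intro E hE
      have key : ∀ m : ℕ, ∃ Bm : Set X, MeasurableSet[borel X] Bm ∧ E ⊆ Bm ∧
          μ (Bm \ E) ≤ ((m : ℝ≥0∞) + 1)⁻¹ := by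
        intro m
        obtain ⟨δ, δ0, hδ⟩ := ENNReal.exists_pos_sum_of_countable
          (show ((m : ℝ≥0∞) + 1)⁻¹ ≠ 0 by simp) ℕ
        have keyn : ∀ n : ℕ, ∃ C, IsClosed C ∧ C ⊆ W n \ E ∧ μ (W n \ E) ≤ μ C + δ n :=
          fun n => hinner _ ((hWm n).diff hE)
            (lt_of_le_of_lt (measure_mono diff_subset) (hWf n)).ne _
            (ENNReal.coe_pos.2 (δ0 n)).ne'
        choose C hCc hCsub hCb using keyn
        refine ⟨⋃ n, W n \ C n,
          MeasurableSet.iUnion fun n => (hob (hWo n)).diff (hcb (hCc n)), ?_, ?_⟩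
        · intro x hx
          have hxu : x ∈ ⋃ n, W n := hWu.symm ▸ mem_univ x
          obtain ⟨n, hn⟩ := mem_iUnion.1 hxu
          exact mem_iUnion.2 ⟨n, hn, fun hc => (hCsub n hc).2 hx⟩
        · have hterm : ∀ n, μ ((W n \ C n) \ E) ≤ δ n := by
            intro n
            have hfinC : μ (C n) ≠ ⊤ :=
              (lt_of_le_of_lt (measure_mono ((hCsub n).trans diff_subset)) (hWf n)).ne
            have heq : (W n \ C n) \ E = (W n \ E) \ C n := by
              ext x; simp only [mem_diff]; tauto
            rw [heq, measure_diff (hCsub n) (hCc n).measurableSet.nullMeasurableSet hfinC]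
            exact tsub_le_iff_left.mpr (hCb n)
          calc μ ((⋃ n, W n \ C n) \ E) ≤ ∑' n, μ ((W n \ C n) \ E) := by
                rw [iUnion_diff]; exact measure_iUnion_le _
            _ ≤ ∑' n, (δ n : ℝ≥0∞) := ENNReal.tsum_le_tsum hterm
            _ ≤ ((m : ℝ≥0∞) + 1)⁻¹ := hδ.le
      choose Bm hBmb hEBm hBm using key
      refine ⟨⋂ m, Bm m, MeasurableSet.iInter fun m => hBmb m, subset_iInter hEBm, ?_⟩
      have hdiff0 : μ ((⋂ m, Bm m) \ E) = 0 :=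
        hzero fun m => (measure_mono (diff_subset_diff_left (iInter_subset _ m))).trans (hBm m)
      calc μ (⋂ m, Bm m) = μ ((⋂ m, Bm m) ∩ E) + μ ((⋂ m, Bm m) \ E) :=
            (measure_inter_add_diff _ hE).symm
        _ = μ E := by rw [hdiff0, add_zero, inter_eq_right.mpr (subset_iInter hEBm)]
    · intro U hU
      have keynm : ∀ n m : ℕ, ∃ C, IsClosed C ∧ C ⊆ U ∩ W n ∧
          μ (U ∩ W n) ≤ μ C + ((m : ℝ≥0∞) + 1)⁻¹ :=
        fun n m => hinner _ ((hBorel U hU).inter (hWm n))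
          (lt_of_le_of_lt (measure_mono inter_subset_right) (hWf n)).ne _ (by simp)
      choose C hCc hCsub hCb using keynm
      set c : ℕ → Set X := fun k => C (Nat.unpair k).1 (Nat.unpair k).2 with hcdef
      have hcEq : (⋃ k, c k) = ⋃ n, ⋃ m, C n m := by
        ext x
        simp only [mem_iUnion, hcdef]
        constructor
        · rintro ⟨k, hk⟩; exact ⟨_, _, hk⟩
        · rintro ⟨n, m, h⟩; exact ⟨Nat.pair n m, by rw [Nat.unpair_pair]; exact h⟩
      refine ⟨⋃ k, c k, U \ ⋃ k, c k, c, fun k => hCc _ _, rfl, ?_, ?_⟩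
      · have hpart : ∀ n, μ ((U ∩ W n) \ ⋃ k, c k) = 0 := by
          intro n
          refine hzero fun m => ?_
          have hsub2 : C n m ⊆ ⋃ k, c k := by rw [hcEq]; exact fun x hx => mem_iUnion₂.2 ⟨n, m, hx⟩
          refine (measure_mono (diff_subset_diff_right hsub2)).trans ?_
          rw [measure_diff (hCsub n m) (hCc n m).measurableSet.nullMeasurableSet
            (lt_of_le_of_lt (measure_mono ((hCsub n m).trans inter_subset_right)) (hWf n)).ne]
          exact tsub_le_iff_left.mpr (hCb n m)
        have hcover' : U \ (⋃ k, c k) ⊆ ⋃ n, (U ∩ W n) \ ⋃ k, c k := by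
          intro x hx
          have hxu : x ∈ ⋃ n, W n := hWu.symm ▸ mem_univ x
          obtain ⟨n, hn⟩ := mem_iUnion.1 hxu
          exact mem_iUnion.2 ⟨n, ⟨hx.1, hn⟩, hx.2⟩
        refine le_antisymm ?_ zero_le
        calc μ (U \ ⋃ k, c k) ≤ ∑' n, μ ((U ∩ W n) \ ⋃ k, c k) :=
              (measure_mono hcover').trans (measure_iUnion_le _)
          _ = 0 := by simp [hpart]
      · exact (union_diff_cancel (iUnion_subset fun k => (hCsub _ _).trans inter_subset_left)).symm
  tfae_finish
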